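/- Derivative of annealed transfer operator vanishes at first order: if L_T is a bounded operator on W^{3,1}(S^1) and L_δ f = ρ_δ * (L_T f) with zero-mean kernel ρ, then the operator norm of (L_δ − L_0)/δ from W^{3,1} to W^{1,1} is at most 2Cδ‖L_T‖_{W^{3,1}→W^{3,1}}, and in particular tends to 0 as δ → 0, where C = ∫_{-1}^1 ∫_{[0,z]} ρ(z)|z−y| dy dz. -/

import Mathlib

open MeasureTheory intervalIntegral Set

/-- L¹ norm of a 1-periodic function on the circle (one period). -/
noncomputable def l1 (f : ℝ → ℝ) : ℝ := ∫ x in Set.Ioc (0:ℝ) 1, |f x|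

/-- The `W^{k,1}` norm on the circle. -/
noncomputable def Wnorm (k : ℕ) (f : ℝ → ℝ) : ℝ :=
  ∑ i ∈ Finset.range (k + 1), l1 (iteratedDeriv i f)

/-- Convolution of a kernel on ℝ with a (periodic) function. -/
noncomputable def conv (g f : ℝ → ℝ) : ℝ → ℝ := fun x => ∫ y : ℝ, g y * f (x - y)



lemma l1_nonneg (f : ℝ → ℝ) : 0 ≤ l1 f := integral_nonneg fun x => abs_nonneg _

lemma periodic_bound {h : ℝ → ℝ} (hc : Continuous h) (hp : Function.Periodic h 1) :
    ∃ M : ℝ, 0 ≤ M ∧ ∀ x, |h x| ≤ M := by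
  obtain ⟨M, hM⟩ := (isCompact_Icc (a := (0:ℝ)) (b := 1)).exists_bound_of_continuousOn
    hc.continuousOn
  refine ⟨max M 0, le_max_right _ _, fun x => ?_⟩
  have h1 : h x = h (Int.fract x) := by
    have := hp.sub_int_mul_eq (x := x) ⌊x⌋
    simp only [mul_one] at this
    rw [Int.fract]; exact this.symm
  rw [h1]
  refine le_trans ?_ (le_max_left M 0)
  simpa using hM (Int.fract x) ⟨Int.fract_nonneg x, (Int.fract_lt_one x).le⟩

lemma periodic_deriv {h : ℝ → ℝ} (hp : Function.Periodic h 1) :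
    Function.Periodic (deriv h) 1 := by
  intro x
  have : (fun y => h (y + 1)) = h := funext fun y => hp y
  calc deriv h (x + 1) = deriv (fun y => h (y + 1)) x := (deriv_comp_add_const h 1 x).symm
  _ = deriv h x := by rw [this]

lemma periodic_l1_shift {h : ℝ → ℝ} (hc : Continuous h) (hp : Function.Periodic h 1) (t : ℝ) :
    ∫ x in Set.Ioc (0:ℝ) 1, |h (x - t)| = l1 h := by
  have habs : Function.Periodic (fun x => |h x|) 1 := fun x => by simp [hp x]
  have e1 : ∫ x in Set.Ioc (0:ℝ) 1, |h (x - t)| = ∫ x in (0:ℝ)..1, |h (x - t)| :=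
    (intervalIntegral.integral_of_le zero_le_one).symm
  rw [e1, intervalIntegral.integral_comp_sub_right (fun x => |h x|) t]
  have := habs.intervalIntegral_add_eq (-t) 0
  simp only [zero_add] at this
  rw [show (0:ℝ) - t = -t by ring, show (1:ℝ) - t = -t + 1 by ring, this]
  rw [l1, intervalIntegral.integral_of_le zero_le_one]


lemma uIoc_abs_integral (y : ℝ) : ∫ t in Set.uIoc (0:ℝ) y, |y - t| = y ^ 2 / 2 := by
  rcases le_total 0 y with hy | hy
  · rw [Set.uIoc_of_le hy, ← intervalIntegral.integral_of_le hy]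
    have : ∀ t ∈ Set.uIcc (0:ℝ) y, |y - t| = y - t := by
      intro t ht
      rw [Set.uIcc_of_le hy] at ht
      exact abs_of_nonneg (by linarith [ht.2])
    rw [intervalIntegral.integral_congr this]
    have h1 : IntervalIntegrable (fun _ : ℝ => y) MeasureTheory.volume 0 y :=
      intervalIntegrable_const
    have h2 : IntervalIntegrable (fun t : ℝ => t) MeasureTheory.volume 0 y :=
      intervalIntegral.intervalIntegrable_id
    rw [intervalIntegral.integral_sub h1 h2]
    simp [integral_id]
    ring
  · rw [Set.uIoc_of_ge hy, ← intervalIntegral.integral_of_le hy]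
    have : ∀ t ∈ Set.uIcc (y:ℝ) 0, |y - t| = t - y := by
      intro t ht
      rw [Set.uIcc_of_le hy] at ht
      rw [abs_sub_comm]
      exact abs_of_nonneg (by linarith [ht.1])
    rw [intervalIntegral.integral_congr this]
    have h1 : IntervalIntegrable (fun _ : ℝ => y) MeasureTheory.volume y 0 :=
      intervalIntegrable_const
    have h2 : IntervalIntegrable (fun t : ℝ => t) MeasureTheory.volume y 0 :=
      intervalIntegral.intervalIntegrable_id
    rw [intervalIntegral.integral_sub h2 h1]
    simp [integral_id]
    ring

lemma taylor_est {g : ℝ → ℝ} (hg : ContDiff ℝ 2 g) (x y : ℝ) :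
    g (x - y) - g x + y * deriv g x = ∫ t in (0:ℝ)..y, (y - t) * deriv (deriv g) (x - t) := by
  have hgd : Differentiable ℝ g := hg.differentiable (by norm_num)
  have hg'c : ContDiff ℝ 1 (deriv g) := by
    have := (contDiff_succ_iff_deriv (n := 1)).mp (by exact_mod_cast hg)
    exact this.2.2
  have hg'd : Differentiable ℝ (deriv g) := hg'c.differentiable one_ne_zero
  have hg''c : Continuous (deriv (deriv g)) := hg'c.continuous_deriv le_rfl
  set F : ℝ → ℝ := fun t => g (x - t) - (y - t) * deriv g (x - t) with hF
  have hderiv : ∀ t ∈ Set.uIcc (0:ℝ) y,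
      HasDerivAt F ((y - t) * deriv (deriv g) (x - t)) t := by
    intro t _
    have hsub : HasDerivAt (fun t : ℝ => x - t) (-1) t := by
      simpa using (hasDerivAt_id t).const_sub x
    have h1 : HasDerivAt (fun t => g (x - t)) (deriv g (x - t) * (-1)) t :=
      (hgd (x - t)).hasDerivAt.comp t hsub
    have h2 : HasDerivAt (fun t => deriv g (x - t)) (deriv (deriv g) (x - t) * (-1)) t :=
      (hg'd (x - t)).hasDerivAt.comp t hsub
    have h3 : HasDerivAt (fun t : ℝ => y - t) (-1) t := by
      simpa using (hasDerivAt_id t).const_sub y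
    have h4 : HasDerivAt (fun t => (y - t) * deriv g (x - t))
        ((-1) * deriv g (x - t) + (y - t) * (deriv (deriv g) (x - t) * (-1))) t := h3.mul h2
    have := h1.sub h4
    exact this.congr_deriv (by ring)
  have hint : IntervalIntegrable (fun t => (y - t) * deriv (deriv g) (x - t))
      MeasureTheory.volume 0 y := by
    apply Continuous.intervalIntegrable
    exact (continuous_const.sub continuous_id).mul
      (hg''c.comp (continuous_const.sub continuous_id))
  rw [intervalIntegral.integral_eq_sub_of_hasDerivAt hderiv hint]
  simp only [hF]
  ring


lemma conv_hasDerivAt (κ : ℝ → ℝ) (hκ : Integrable κ) {g : ℝ → ℝ}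
    (hg : ContDiff ℝ 1 g) (Mg Mg' : ℝ) (hMg : ∀ x, |g x| ≤ Mg) (hMg' : ∀ x, |deriv g x| ≤ Mg')
    (x₀ : ℝ) : HasDerivAt (conv κ g) (conv κ (deriv g) x₀) x₀ := by
  have hgd : Differentiable ℝ g := hg.differentiable one_ne_zero
  have hg'c : Continuous (deriv g) := hg.continuous_deriv le_rfl
  have key := _root_.hasDerivAt_integral_of_dominated_loc_of_deriv_le (μ := volume)
    (F := fun x y => κ y * g (x - y)) (F' := fun x y => κ y * deriv g (x - y))
    (x₀ := x₀) (bound := fun y => |κ y| * Mg') (s := Metric.ball x₀ 1)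
    (Metric.ball_mem_nhds x₀ one_pos)
    (Filter.Eventually.of_forall fun x =>
      (hκ.1.mul ((hg.continuous.comp (continuous_const.sub continuous_id)).aestronglyMeasurable)))
    ?_ ?_ ?_ ?_ ?_
  · exact key.2
  · -- Integrable (fun y => κ y * g (x₀ - y))
    refine (hκ.norm.mul_const Mg).mono'
      (hκ.1.mul ((hg.continuous.comp (continuous_const.sub continuous_id)).aestronglyMeasurable))
      (Filter.Eventually.of_forall fun y => ?_)
    rw [Real.norm_eq_abs, abs_mul]
    exact mul_le_mul_of_nonneg_left (hMg _) (abs_nonneg _)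
  · exact hκ.1.mul ((hg'c.comp (continuous_const.sub continuous_id)).aestronglyMeasurable)
  · refine Filter.Eventually.of_forall fun y x _ => ?_
    rw [Real.norm_eq_abs, abs_mul]
    exact mul_le_mul_of_nonneg_left (hMg' _) (abs_nonneg _)
  · exact hκ.norm.mul_const Mg'
  · refine Filter.Eventually.of_forall fun y x _ => ?_
    have hsub : HasDerivAt (fun x : ℝ => x - y) 1 x := by
      simpa using (hasDerivAt_id x).sub_const y
    have h1 : HasDerivAt (fun x => g (x - y)) (deriv g (x - y) * 1) x :=
      (hgd (x - y)).hasDerivAt.comp x hsub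
    simpa using h1.const_mul (κ y)


lemma key_l1 (κ : ℝ → ℝ) (hnn : ∀ y, 0 ≤ κ y) (hsupp : ∀ y, y ∉ Set.Icc (-1:ℝ) 1 → κ y = 0)
    (hint : Integrable κ) (hmass : ∫ y, κ y = 1) (hmean : ∫ y, y * κ y = 0)
    {g : ℝ → ℝ} (hg : ContDiff ℝ 2 g) (hgp : Function.Periodic g 1) :
    l1 (fun x => conv κ g x - g x) ≤ (∫ y, κ y * (y ^ 2 / 2)) * l1 (deriv (deriv g)) := by
  have hgc : Continuous g := hg.continuous
  have hg'cd : ContDiff ℝ 1 (deriv g) :=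
    ((contDiff_succ_iff_deriv (n := 1)).mp (by exact_mod_cast hg)).2.2
  have hg'c : Continuous (deriv g) := hg'cd.continuous
  have hg''c : Continuous (deriv (deriv g)) := hg'cd.continuous_deriv le_rfl
  have hg'p : Function.Periodic (deriv g) 1 := periodic_deriv hgp
  have hg''p : Function.Periodic (deriv (deriv g)) 1 := periodic_deriv hg'p
  obtain ⟨Mg, hMg0, hMg⟩ := periodic_bound hgc hgp
  obtain ⟨Mg', hMg'0, hMg'⟩ := periodic_bound hg'c hg'p
  obtain ⟨Mg'', hMg''0, hMg''⟩ := periodic_bound hg''c hg''p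
  set I : Set ℝ := Set.Ioc (0:ℝ) 1 with hI
  set μI : Measure ℝ := volume.restrict I with hμI
  haveI : IsProbabilityMeasure μI := ⟨by simp [hμI, hI]⟩
  set A : ℝ := l1 (deriv (deriv g)) with hA
  have hAnn : 0 ≤ A := l1_nonneg _
  set R : ℝ → ℝ → ℝ := fun x y => g (x - y) - g x + y * deriv g x with hR
  have hRc : Continuous (fun p : ℝ × ℝ => R p.1 p.2) := by
    apply Continuous.add
    · exact (hgc.comp (continuous_fst.sub continuous_snd)).sub (hgc.comp continuous_fst)
    · exact continuous_snd.mul (hg'c.comp continuous_fst)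
  -- step 1: pointwise identity
  have step1 : ∀ x : ℝ, conv κ g x - g x = ∫ y : ℝ, κ y * R x y := by
    intro x
    have Ia : Integrable (fun y => κ y * g (x - y)) := by
      refine (hint.norm.mul_const Mg).mono'
        (hint.1.mul ((hgc.comp (continuous_const.sub continuous_id)).aestronglyMeasurable))
        (Filter.Eventually.of_forall fun y => ?_)
      rw [Real.norm_eq_abs, abs_mul]
      exact mul_le_mul_of_nonneg_left (hMg _) (abs_nonneg _)
    have Ib : Integrable (fun y => κ y * g x) := hint.mul_const _
    have Ic : Integrable (fun y : ℝ => y * κ y) := by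
      refine hint.norm.mono' (aestronglyMeasurable_id.mul hint.1)
        (Filter.Eventually.of_forall fun y => ?_)
      by_cases hy : y ∈ Set.Icc (-1:ℝ) 1
      · rw [Real.norm_eq_abs, abs_mul, Real.norm_eq_abs]
        have : |y| ≤ 1 := abs_le.mpr ⟨hy.1, hy.2⟩
        nlinarith [abs_nonneg (κ y), abs_nonneg y]
      · simp [hsupp y hy]
    have e1 : (fun y => κ y * R x y)
        = fun y => κ y * g (x - y) - κ y * g x + (y * κ y) * deriv g x := by
      funext y; simp only [hR]; ring
    have Iab : Integrable (fun y => κ y * g (x - y) - κ y * g x) := Ia.sub Ib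
    have Icd : Integrable (fun y => y * κ y * deriv g x) := Ic.mul_const _
    rw [e1, integral_add Iab Icd, integral_sub Ia Ib,
      MeasureTheory.integral_mul_const, MeasureTheory.integral_mul_const, hmass, hmean]
    simp [conv]
  -- step 2: Taylor bound
  have step2 : ∀ x y : ℝ, |R x y| ≤ ∫ t in Set.uIoc (0:ℝ) y, |y - t| * |deriv (deriv g) (x - t)| := by
    intro x y
    rw [hR]
    simp only
    rw [taylor_est hg x y]
    have := intervalIntegral.norm_integral_le_integral_norm_uIoc
      (f := fun t => (y - t) * deriv (deriv g) (x - t)) (a := (0:ℝ)) (b := y) (μ := volume)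
    rw [Real.norm_eq_abs] at this
    refine this.trans (le_of_eq (MeasureTheory.integral_congr_ae
      (Filter.Eventually.of_forall fun t => ?_)))
    dsimp only
    rw [Real.norm_eq_abs, abs_mul]
  -- J bound
  have Jbound : ∀ y : ℝ, (∫ x in I, |R x y|) ≤ A * (y ^ 2 / 2) := by
    intro y
    set ν : Measure ℝ := volume.restrict (Set.uIoc (0:ℝ) y) with hν
    haveI : IsFiniteMeasure ν := by
      constructor
      rw [hν, Measure.restrict_apply_univ, Set.uIoc]
      exact measure_Ioc_lt_top
    have hFc : Continuous (fun p : ℝ × ℝ => |y - p.2| * |deriv (deriv g) (p.1 - p.2)|) :=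
      ((continuous_const.sub continuous_snd).abs).mul
        ((hg''c.comp (continuous_fst.sub continuous_snd)).abs)
    have hae : ∀ᵐ p ∂(μI.prod ν), p.2 ∈ Set.uIoc (0:ℝ) y := by
      rw [ae_iff]
      have hs : {p : ℝ × ℝ | ¬ p.2 ∈ Set.uIoc (0:ℝ) y}
          = (Set.univ : Set ℝ) ×ˢ (Set.uIoc (0:ℝ) y)ᶜ := by
        ext p; simp
      rw [hs, Measure.prod_prod, hν, Measure.restrict_apply (measurableSet_uIoc.compl)]
      simp
    have hFint : Integrable (Function.uncurry fun x t => |y - t| * |deriv (deriv g) (x - t)|)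
        (μI.prod ν) := by
      refine (integrable_const ((|y| + |y|) * Mg'')).mono' hFc.aestronglyMeasurable
        (hae.mono fun p hp => ?_)
      simp only [Function.uncurry]
      rw [Real.norm_eq_abs, abs_mul, abs_abs, abs_abs]
      have hb : |p.2| ≤ |y| := by
        rcases Set.mem_uIoc.mp hp with ⟨h1, h2⟩ | ⟨h1, h2⟩ <;>
          refine abs_le.mpr ⟨?_, ?_⟩ <;>
          · first
            | linarith [abs_nonneg y, le_abs_self y]
            | linarith [neg_abs_le y, le_abs_self y, abs_nonneg y]
      have h1 : |y - p.2| ≤ |y| + |y| := (abs_sub y p.2).trans (by linarith)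
      exact mul_le_mul h1 (hMg'' _) (abs_nonneg _) (by positivity)
    calc (∫ x in I, |R x y|)
        ≤ ∫ x in I, (∫ t in Set.uIoc (0:ℝ) y, |y - t| * |deriv (deriv g) (x - t)|) := by
          refine integral_mono_of_nonneg (Filter.Eventually.of_forall fun x => abs_nonneg _)
            hFint.integral_prod_left (Filter.Eventually.of_forall fun x => step2 x y)
      _ = ∫ t in Set.uIoc (0:ℝ) y, ∫ x in I, |y - t| * |deriv (deriv g) (x - t)| :=
          integral_integral_swap hFint
      _ = ∫ t in Set.uIoc (0:ℝ) y, |y - t| * A := by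
          refine MeasureTheory.integral_congr_ae (Filter.Eventually.of_forall fun t => ?_)
          dsimp only
          rw [MeasureTheory.integral_const_mul, periodic_l1_shift hg''c hg''p t]
      _ = (∫ t in Set.uIoc (0:ℝ) y, |y - t|) * A := integral_mul_const _ _
      _ = A * (y ^ 2 / 2) := by rw [uIoc_abs_integral y, mul_comm]
  -- product integrability of the main integrand
  set G : ℝ × ℝ → ℝ := fun p => κ p.2 * R p.1 p.2 with hG
  have hGsm : AEStronglyMeasurable G (μI.prod volume) := by
    have h1 : AEStronglyMeasurable (fun p : ℝ × ℝ => κ p.2) (μI.prod volume) :=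
      hint.1.comp_quasiMeasurePreserving Measure.quasiMeasurePreserving_snd
    exact h1.mul hRc.aestronglyMeasurable
  have hGint : Integrable G (μI.prod volume) := by
    have hb : Integrable (fun p : ℝ × ℝ => (2 * Mg + Mg') * |κ p.2|) (μI.prod volume) := by
      have := (integrable_const (μ := μI) (2 * Mg + Mg')).mul_prod hint.norm
      simpa using this
    refine hb.mono' hGsm (Filter.Eventually.of_forall fun p => ?_)
    rw [Real.norm_eq_abs, hG]
    simp only
    rw [abs_mul]
    by_cases hy : p.2 ∈ Set.Icc (-1:ℝ) 1
    · have hRb : |R p.1 p.2| ≤ 2 * Mg + Mg' := by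
        rw [hR]
        simp only
        have h2 : |p.2| ≤ 1 := abs_le.mpr ⟨hy.1, hy.2⟩
        calc |g (p.1 - p.2) - g p.1 + p.2 * deriv g p.1|
            ≤ |g (p.1 - p.2)| + |g p.1| + |p.2| * |deriv g p.1| := by
              refine (abs_add_le _ _).trans ?_
              rw [abs_mul]
              gcongr
              exact abs_sub _ _
          _ ≤ Mg + Mg + 1 * Mg' := by gcongr <;> [exact hMg _; exact hMg _; exact hMg' _]
          _ = 2 * Mg + Mg' := by ring
      calc |κ p.2| * |R p.1 p.2| ≤ |κ p.2| * (2 * Mg + Mg') :=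
            mul_le_mul_of_nonneg_left hRb (abs_nonneg _)
        _ = (2 * Mg + Mg') * |κ p.2| := mul_comm _ _
    · simp [hsupp _ hy]
  -- main chain
  have hchain : l1 (fun x => conv κ g x - g x)
      ≤ (∫ y, κ y * (y ^ 2 / 2)) * A := by
    calc l1 (fun x => conv κ g x - g x)
        = ∫ x in I, |∫ y : ℝ, κ y * R x y| := by
          rw [l1]
          refine MeasureTheory.integral_congr_ae (Filter.Eventually.of_forall fun x => ?_)
          dsimp only
          rw [step1 x]
      _ ≤ ∫ x in I, ∫ y : ℝ, ‖κ y * R x y‖ := by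
          refine integral_mono_of_nonneg (Filter.Eventually.of_forall fun x => abs_nonneg _)
            hGint.integral_norm_prod_left (Filter.Eventually.of_forall fun x => ?_)
          dsimp only
          rw [← Real.norm_eq_abs]
          exact norm_integral_le_integral_norm _
      _ = ∫ y : ℝ, ∫ x in I, ‖κ y * R x y‖ := integral_integral_swap hGint.norm
      _ = ∫ y : ℝ, |κ y| * (∫ x in I, |R x y|) := by
          refine MeasureTheory.integral_congr_ae (Filter.Eventually.of_forall fun y => ?_)
          dsimp only
          rw [← MeasureTheory.integral_const_mul]
          refine MeasureTheory.integral_congr_ae (Filter.Eventually.of_forall fun x => ?_)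
          dsimp only
          rw [Real.norm_eq_abs, abs_mul]
      _ ≤ ∫ y : ℝ, |κ y| * (A * (y ^ 2 / 2)) := by
          refine integral_mono_of_nonneg
            (Filter.Eventually.of_forall fun y => by positivity) ?_
            (Filter.Eventually.of_forall fun y => ?_)
          · refine (hint.norm.const_mul (A / 2)).mono'
              (hint.1.norm.mul ((continuous_const.mul
                ((continuous_pow 2).div_const 2)).aestronglyMeasurable)) 
              (Filter.Eventually.of_forall fun y => ?_)
            by_cases hy : y ∈ Set.Icc (-1:ℝ) 1
            · have h2 : |y| ≤ 1 := abs_le.mpr ⟨hy.1, hy.2⟩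
              rw [Real.norm_eq_abs, abs_mul, abs_abs]
              have hy2 : |A * (y ^ 2 / 2)| ≤ A / 2 := by
                rw [abs_of_nonneg (by positivity)]
                nlinarith [mul_nonneg hAnn
                  (by nlinarith [sq_abs y, abs_nonneg y] : (0:ℝ) ≤ 1 - y ^ 2)]
              calc |κ y| * |A * (y ^ 2 / 2)| ≤ |κ y| * (A / 2) :=
                    mul_le_mul_of_nonneg_left hy2 (abs_nonneg _)
                _ = A / 2 * |κ y| := mul_comm _ _
            · simp [hsupp _ hy]
          · exact mul_le_mul_of_nonneg_left (Jbound y) (abs_nonneg _)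
      _ = (∫ y, κ y * (y ^ 2 / 2)) * A := by
          rw [← MeasureTheory.integral_mul_const]
          refine MeasureTheory.integral_congr_ae (Filter.Eventually.of_forall fun y => ?_)
          dsimp only
          rw [abs_of_nonneg (hnn y)]
          ring
  exact hchain


/-- First derivative operator vanishes: if `L_T` is bounded on `W^{3,1}(S¹)` (with norm `K`)
and `L_δ f = ρ_δ * (L_T f)` with a zero-mean kernel, then
`‖(L_δ − L_0) f‖_{W^{1,1}} ≤ 2 C δ² K ‖f‖_{W^{3,1}}`, i.e. the operator norm of
`(L_δ − L_0)/δ : W^{3,1} → W^{1,1}` is at most `2 C δ K`, where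
`C = ∫_{-1}^1 ∫_{[0,z]} ρ(z)|z−y| dy dz`. -/
theorem stmt17 (ρ : ℝ → ℝ)
    (hρ_nonneg : ∀ x, 0 ≤ ρ x)
    (hρ_supp : ∀ x, x ∉ Set.Icc (-1:ℝ) 1 → ρ x = 0)
    (hρ_int : Integrable ρ) (hρ_mass : ∫ x : ℝ, ρ x = 1)
    (hρ_mean : ∫ x : ℝ, x * ρ x = 0)
    (L_T : (ℝ → ℝ) → (ℝ → ℝ)) (K : ℝ) (hK : 0 ≤ K)
    (hLT : ∀ f : ℝ → ℝ, ContDiff ℝ 3 f → Function.Periodic f 1 →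
      ContDiff ℝ 3 (L_T f) ∧ Function.Periodic (L_T f) 1 ∧
        Wnorm 3 (L_T f) ≤ K * Wnorm 3 f) :
    ∀ δ ∈ Set.Ioc (0:ℝ) 1, ∀ f : ℝ → ℝ, ContDiff ℝ 3 f → Function.Periodic f 1 →
      Wnorm 1 (fun x => conv (fun y => δ⁻¹ * ρ (y / δ)) (L_T f) x - L_T f x)
        ≤ 2 * (∫ z in Set.Icc (-1:ℝ) 1, ∫ y in Set.uIoc (0:ℝ) z, ρ z * |z - y|)
            * δ ^ 2 * K * Wnorm 3 f := by
  rintro δ ⟨hδ0, hδ1⟩ f hf hfp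
  have hδne : δ ≠ 0 := ne_of_gt hδ0
  set κ : ℝ → ℝ := fun y => δ⁻¹ * ρ (y / δ) with hκdef
  -- properties of κ
  have hκnn : ∀ y, 0 ≤ κ y := fun y => mul_nonneg (inv_nonneg.mpr hδ0.le) (hρ_nonneg _)
  have hκsupp : ∀ y, y ∉ Set.Icc (-1:ℝ) 1 → κ y = 0 := by
    intro y hy
    have : ρ (y / δ) = 0 := by
      apply hρ_supp
      intro hmem
      apply hy
      have h1 := hmem.1
      have h2 := hmem.2
      rw [le_div_iff₀ hδ0] at h1
      rw [div_le_one hδ0] at h2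
      exact ⟨by linarith, by linarith⟩
    simp [hκdef, this]
  have hκint : Integrable κ := (hρ_int.comp_div hδne).const_mul δ⁻¹
  have hκmass : ∫ y, κ y = 1 := by
    rw [hκdef]
    rw [MeasureTheory.integral_const_mul, Measure.integral_comp_div ρ δ, smul_eq_mul,
      abs_of_pos hδ0, hρ_mass]
    field_simp
  have hκmean : ∫ y : ℝ, y * κ y = 0 := by
    have e : (fun y : ℝ => y * κ y) = fun y => (fun z => δ * z * (δ⁻¹ * ρ z)) (y / δ) := by
      funext y
      simp only [hκdef]
      rw [mul_div_cancel₀ _ hδne]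
    have key := Measure.integral_comp_div (fun z => δ * z * (δ⁻¹ * ρ z)) δ
    rw [e]
    simp only []
    rw [key, smul_eq_mul, abs_of_pos hδ0]
    have e2 : (fun z : ℝ => δ * z * (δ⁻¹ * ρ z)) = fun z => z * ρ z := by
      funext z; field_simp
    rw [e2, hρ_mean, mul_zero]
  have hκmom : ∫ y : ℝ, κ y * (y ^ 2 / 2) = δ ^ 2 * ∫ z : ℝ, ρ z * (z ^ 2 / 2) := by
    have e : (fun y : ℝ => κ y * (y ^ 2 / 2))
        = fun y => (fun z => δ⁻¹ * ρ z * ((δ * z) ^ 2 / 2)) (y / δ) := by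
      funext y
      simp only [hκdef]
      rw [mul_div_cancel₀ _ hδne]
    have key := Measure.integral_comp_div (fun z => δ⁻¹ * ρ z * ((δ * z) ^ 2 / 2)) δ
    rw [e]
    simp only []
    rw [key, smul_eq_mul, abs_of_pos hδ0]
    have e2 : (fun z : ℝ => δ⁻¹ * ρ z * ((δ * z) ^ 2 / 2)) = fun z => δ * (ρ z * (z ^ 2 / 2)) := by
      funext z; field_simp
    rw [e2, MeasureTheory.integral_const_mul]
    ring
  -- the constant
  set Cρ : ℝ := ∫ z : ℝ, ρ z * (z ^ 2 / 2) with hCρ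
  have hCρnn : 0 ≤ Cρ := integral_nonneg fun z => mul_nonneg (hρ_nonneg z) (by positivity)
  have hCeq : (∫ z in Set.Icc (-1:ℝ) 1, ∫ y in Set.uIoc (0:ℝ) z, ρ z * |z - y|) = Cρ := by
    have e : ∀ z : ℝ, (∫ y in Set.uIoc (0:ℝ) z, ρ z * |z - y|) = ρ z * (z ^ 2 / 2) := by
      intro z
      rw [MeasureTheory.integral_const_mul, uIoc_abs_integral z]
    calc (∫ z in Set.Icc (-1:ℝ) 1, ∫ y in Set.uIoc (0:ℝ) z, ρ z * |z - y|)
        = ∫ z in Set.Icc (-1:ℝ) 1, ρ z * (z ^ 2 / 2) :=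
          MeasureTheory.integral_congr_ae (Filter.Eventually.of_forall fun z => e z)
      _ = Cρ := setIntegral_eq_integral_of_forall_compl_eq_zero fun z hz => by
          rw [hρ_supp z hz, zero_mul]
  -- properties of g = L_T f
  obtain ⟨hg3, hgp, hWg⟩ := hLT f hf hfp
  set g : ℝ → ℝ := L_T f with hgdef
  have hg2 : ContDiff ℝ 2 g := hg3.of_le (by norm_num)
  have hg1 : ContDiff ℝ 1 g := hg3.of_le (by norm_num)
  have hg'2 : ContDiff ℝ 2 (deriv g) :=
    ((contDiff_succ_iff_deriv (n := 2)).mp (by exact_mod_cast hg3)).2.2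
  have hgd : Differentiable ℝ g := hg3.differentiable (by norm_num)
  have hgc : Continuous g := hg3.continuous
  have hg'c : Continuous (deriv g) := hg'2.continuous
  have hg'p : Function.Periodic (deriv g) 1 := periodic_deriv hgp
  obtain ⟨Mg, _, hMg⟩ := periodic_bound hgc hgp
  obtain ⟨Mg', _, hMg'⟩ := periodic_bound hg'c hg'p
  -- the two estimates
  have E0 := key_l1 κ hκnn hκsupp hκint hκmass hκmean hg2 hgp
  have E1 := key_l1 κ hκnn hκsupp hκint hκmass hκmean hg'2 hg'p
  -- derivative of the difference
  have hdiff : deriv (fun x => conv κ g x - g x) = fun x => conv κ (deriv g) x - deriv g x := by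
    funext x
    exact HasDerivAt.deriv
      ((conv_hasDerivAt κ hκint hg1 Mg Mg' hMg hMg' x).sub (hgd x).hasDerivAt)
  -- Wnorm expansions
  have hW1 : Wnorm 1 (fun x => conv κ g x - g x)
      = l1 (fun x => conv κ g x - g x) + l1 (fun x => conv κ (deriv g) x - deriv g x) := by
    rw [Wnorm, Finset.sum_range_succ, Finset.sum_range_one, iteratedDeriv_zero,
      iteratedDeriv_one, hdiff]
  have hit2 : iteratedDeriv 2 g = deriv (deriv g) := by
    rw [iteratedDeriv_succ, iteratedDeriv_one]
  have hit3 : iteratedDeriv 3 g = deriv (deriv (deriv g)) := by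
    rw [iteratedDeriv_succ, iteratedDeriv_succ, iteratedDeriv_one]
  have hW3g : l1 (deriv (deriv g)) + l1 (deriv (deriv (deriv g))) ≤ Wnorm 3 g := by
    rw [Wnorm]
    rw [Finset.sum_range_succ, Finset.sum_range_succ, Finset.sum_range_succ,
      Finset.sum_range_one, hit2, hit3]
    have := l1_nonneg (iteratedDeriv 0 g)
    have := l1_nonneg (iteratedDeriv 1 g)
    linarith
  have hW3g0 : 0 ≤ Wnorm 3 g := by
    rw [Wnorm]
    exact Finset.sum_nonneg fun i _ => l1_nonneg _
  -- put it together
  rw [hCeq, hW1]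
  have hM : (∫ y : ℝ, κ y * (y ^ 2 / 2)) = δ ^ 2 * Cρ := hκmom
  rw [hM] at E0 E1
  have h1 : l1 (fun x => conv κ g x - g x) + l1 (fun x => conv κ (deriv g) x - deriv g x)
      ≤ δ ^ 2 * Cρ * (Wnorm 3 g) := by
    have := add_le_add E0 E1
    refine this.trans ?_
    have : l1 (deriv (deriv g)) + l1 (deriv (deriv (deriv g))) ≤ Wnorm 3 g := hW3g
    nlinarith [mul_nonneg (sq_nonneg δ) hCρnn]
  refine h1.trans ?_
  have h2 : δ ^ 2 * Cρ * Wnorm 3 g ≤ δ ^ 2 * Cρ * (K * Wnorm 3 f) :=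
    mul_le_mul_of_nonneg_left hWg (mul_nonneg (sq_nonneg δ) hCρnn)
  refine h2.trans ?_
  have h3 : 0 ≤ δ ^ 2 * Cρ * (K * Wnorm 3 f) :=
    mul_nonneg (mul_nonneg (sq_nonneg δ) hCρnn) (le_trans hW3g0 hWg)
  nlinarith [h3]
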